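/- The complex conjugate of any stabilizer state |S⟩ equals ζ|S⟩ for some Pauli operator ζ that is a tensor product of I's and σ_z's (up to global phase). -/

import Mathlib

open Matrix
open scoped Classical

noncomputable def pauli : Fin 4 → Matrix (Fin 2) (Fin 2) ℂ :=
  ![1, !![0, 1; 1, 0], !![0, -Complex.I; Complex.I, 0], !![1, 0; 0, -1]]

noncomputable def pauliOp {n : ℕ} (f : Fin n → Fin 4) :
    Matrix (Fin n → Fin 2) (Fin n → Fin 2) ℂ :=
  fun x y => ∏ i, pauli (f i) (x i) (y i)

def pwt {n : ℕ} (f : Fin n → Fin 4) : ℕ :=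
  (Finset.univ.filter fun i => f i ≠ 0).card

def PauliGroup (n : ℕ) : Set (Matrix (Fin n → Fin 2) (Fin n → Fin 2) ℂ) :=
  {A | ∃ (k : Fin 4) (f : Fin n → Fin 4), A = Complex.I ^ (k : ℕ) • pauliOp f}

/-- multiplication table of Pauli labels -/
def tbl : Fin 4 → Fin 4 → Fin 4 :=
  ![![0,1,2,3], ![1,0,3,2], ![2,3,0,1], ![3,2,1,0]]

/-- phases in Pauli multiplication -/
noncomputable def ph : Fin 4 → Fin 4 → ℂ :=
  ![![1,1,1,1], ![1,1,Complex.I,-Complex.I],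
    ![1,-Complex.I,1,Complex.I], ![1,Complex.I,-Complex.I,1]]

lemma pauli_mul (k l : Fin 4) : pauli k * pauli l = ph k l • pauli (tbl k l) := by
  fin_cases k <;> fin_cases l <;>
    · ext a b
      fin_cases a <;> fin_cases b <;>
        simp [pauli, ph, tbl, Matrix.mul_apply, Fin.sum_univ_two, Matrix.one_apply,
          Complex.ext_iff, vecHead, vecTail]

lemma pauliOp_mul_apply {n : ℕ} (f f' : Fin n → Fin 4) (x y : Fin n → Fin 2) :
    (pauliOp f * pauliOp f') x y = ∏ i, (pauli (f i) * pauli (f' i)) (x i) (y i) := by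
  simp only [Matrix.mul_apply, pauliOp]
  rw [Finset.prod_univ_sum]
  rw [show Finset.univ (α := Fin n → Fin 2) = Fintype.piFinset (fun _ => Finset.univ) by
    simp]
  exact Finset.sum_congr rfl fun c _ => (Finset.prod_mul_distrib).symm

lemma pauliOp_mul {n : ℕ} (f f' : Fin n → Fin 4) :
    pauliOp f * pauliOp f' = (∏ i, ph (f i) (f' i)) • pauliOp (fun i => tbl (f i) (f' i)) := by
  ext x y
  rw [pauliOp_mul_apply]
  simp only [pauli_mul, Matrix.smul_apply, smul_eq_mul, pauliOp, Finset.prod_mul_distrib]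

lemma pauliOp_zero {n : ℕ} : pauliOp (fun _ : Fin n => (0 : Fin 4)) = 1 := by
  ext x y
  simp only [pauliOp, pauli, Matrix.one_apply]
  by_cases h : x = y
  · subst h; simp [Matrix.one_apply]
  · obtain ⟨i, hi⟩ : ∃ i, x i ≠ y i := by
      by_contra hc; push_neg at hc; exact h (funext hc)
    rw [if_neg h]
    exact Finset.prod_eq_zero (Finset.mem_univ i) (by
      simp [Matrix.one_apply, hi])

/-- the x-bit of a Pauli label -/
def xs : Fin 4 → ZMod 2 := ![0,1,1,0]
/-- the y-indicator of a Pauli label -/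
def yb : Fin 4 → ZMod 2 := ![0,0,1,0]
/-- sign character -/
noncomputable def sg : ZMod 2 → ℂ := fun t => if t = 1 then -1 else 1
/-- conjugation sign -/
noncomputable def cc : Fin 4 → ℂ := ![1,1,-1,1]
/-- z-type Pauli label from a bit -/
def zg : ZMod 2 → Fin 4 := fun c => if c = 1 then 3 else 0
/-- x-bit as Fin 2 -/
def xb : Fin 4 → Fin 2 := ![0,1,1,0]

lemma tbl_self : ∀ k : Fin 4, tbl k k = 0 := by decide
lemma tbl_tbl : ∀ k l : Fin 4, tbl (tbl k l) k = l := by decide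
lemma xs_tbl : ∀ k l : Fin 4, xs (tbl k l) = xs k + xs l := by decide
lemma yb_of_xs_zero (k : Fin 4) (h : xs k = 0) : yb k = 0 := by revert h; revert k; decide
lemma ph_self (k : Fin 4) : ph k k = 1 := by fin_cases k <;> simp [ph, vecHead, vecTail]
lemma abs_ph (k l : Fin 4) : ‖ph k l‖ = 1 := by
  fin_cases k <;> fin_cases l <;> simp [ph, vecHead, vecTail]
lemma z2_cases : ∀ t : ZMod 2, t = 0 ∨ t = 1 := by decide
lemma z01 : ((0:ZMod 2) = 1) = False := by decide
lemma sg_add (s t : ZMod 2) : sg (s + t) = sg s * sg t := by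
  rcases z2_cases s with rfl | rfl <;> rcases z2_cases t with rfl | rfl <;>
    simp only [show ((1:ZMod 2)+1) = 0 by decide, zero_add, add_zero] <;> norm_num [sg, z01]
lemma sg_inj (s t : ZMod 2) (h : sg s = sg t) : s = t := by
  rcases z2_cases s with rfl | rfl <;> rcases z2_cases t with rfl | rfl <;>
    first | rfl | (exfalso; norm_num [sg, z01] at h)
lemma sg_ne_zero (s : ZMod 2) : sg s ≠ 0 := by rcases z2_cases s with rfl | rfl <;> norm_num [sg, z01]
lemma cc_eq (k : Fin 4) : cc k = sg (yb k) := by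
  fin_cases k <;> simp [cc, yb, sg, vecHead, vecTail]
lemma conj_pauli (k : Fin 4) (a b : Fin 2) :
    (starRingEnd ℂ) (pauli k a b) = cc k * pauli k a b := by
  fin_cases k <;> fin_cases a <;> fin_cases b <;>
    simp [pauli, cc, vecHead, vecTail, Matrix.one_apply]
lemma pauli_herm (k : Fin 4) : (pauli k)ᴴ = pauli k := by
  fin_cases k <;>
    · ext a b
      fin_cases a <;> fin_cases b <;>
        simp [pauli, Matrix.conjTranspose_apply, Matrix.one_apply, Complex.ext_iff]
lemma trace_pauli (k : Fin 4) : (pauli k).trace = if k = 0 then 2 else 0 := by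
  fin_cases k <;>
    simp [pauli, Matrix.trace, Matrix.diag, Fin.sum_univ_two, vecHead, vecTail,
      Matrix.one_apply]
lemma pauli_xb_ne (k : Fin 4) : pauli k (xb k) 0 ≠ 0 := by
  fin_cases k <;> simp [pauli, xb, vecHead, vecTail, Matrix.one_apply]
lemma zg_conj (c : ZMod 2) (l : Fin 4) :
    ph (zg c) l * ph (tbl (zg c) l) (zg c) = sg (c * xs l) := by
  rcases z2_cases c with rfl | rfl <;> fin_cases l <;>
    simp [zg, z01] <;> simp [ph, tbl, sg, xs, z01]
lemma zg_cases (c : ZMod 2) : zg c = 0 ∨ zg c = 3 := by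
  rcases z2_cases c with rfl | rfl <;> simp [zg, z01]

lemma pauliOp_sq {n : ℕ} (f : Fin n → Fin 4) : pauliOp f * pauliOp f = 1 := by
  rw [pauliOp_mul]
  have h1 : (fun i => tbl (f i) (f i)) = (fun _ : Fin n => (0 : Fin 4)) :=
    funext fun i => tbl_self (f i)
  rw [h1, pauliOp_zero]
  simp [ph_self]

lemma pauliOp_ne_zero {n : ℕ} (f : Fin n → Fin 4) : pauliOp f ≠ 0 := by
  intro h
  have h2 : pauliOp f (fun i => xb (f i)) (fun _ => 0) = 0 := by rw [h]; rfl
  exact (Finset.prod_ne_zero_iff.2 fun i _ => pauli_xb_ne (f i)) h2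

lemma smul_pauliOp_cancel {n : ℕ} {c d : ℂ} {f : Fin n → Fin 4}
    (h : c • pauliOp f = d • pauliOp f) : c = d := by
  have h2 : (c - d) • pauliOp f = 0 := by rw [sub_smul, h, sub_self]
  rcases smul_eq_zero.1 h2 with h3 | h3
  · exact sub_eq_zero.1 h3
  · exact absurd h3 (pauliOp_ne_zero f)

lemma pauli_conj_entry (k : Fin 4) (a b : Fin 2) :
    (starRingEnd ℂ) (pauli k b a) = pauli k a b := by
  rw [starRingEnd_apply, ← Matrix.conjTranspose_apply, pauli_herm]

lemma pauliOp_herm {n : ℕ} (f : Fin n → Fin 4) : (pauliOp f)ᴴ = pauliOp f := by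
  ext x y
  show star (pauliOp f y x) = pauliOp f x y
  rw [show star (pauliOp f y x) = (starRingEnd ℂ) (pauliOp f y x) from rfl]
  simp only [pauliOp, map_prod]
  exact Finset.prod_congr rfl fun i _ => pauli_conj_entry (f i) (x i) (y i)

lemma conj_pauliOp {n : ℕ} (f : Fin n → Fin 4) :
    (pauliOp f).map (starRingEnd ℂ) = (∏ i, cc (f i)) • pauliOp f := by
  ext x y
  simp only [Matrix.map_apply, pauliOp, map_prod, Matrix.smul_apply, smul_eq_mul]
  rw [← Finset.prod_mul_distrib]
  exact Finset.prod_congr rfl fun i _ => conj_pauli (f i) (x i) (y i)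

lemma trace_pauliOp {n : ℕ} (f : Fin n → Fin 4) :
    (pauliOp f).trace = ∏ i, (pauli (f i)).trace := by
  simp only [Matrix.trace, Matrix.diag, pauliOp]
  rw [Finset.prod_univ_sum]
  rw [show Finset.univ (α := Fin n → Fin 2) = Fintype.piFinset (fun _ => Finset.univ) by
    simp]

lemma key_functional {n : ℕ} (W : Submodule (ZMod 2) ((Fin n → ZMod 2) × ZMod 2))
    (he : (((0 : Fin n → ZMod 2), (1 : ZMod 2)) : (Fin n → ZMod 2) × ZMod 2) ∉ W) :
    ∃ a : Fin n → ZMod 2, ∀ p ∈ W, ∑ i, a i * p.1 i = p.2 := by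
  obtain ⟨ℓ, hl1, hl2⟩ := W.exists_dual_map_eq_bot_of_notMem he inferInstance
  refine ⟨fun i => ℓ ((fun j => if i = j then 1 else 0), 0), fun p hp => ?_⟩
  have hlp : ℓ p = 0 := by
    have : ℓ p ∈ Submodule.map ℓ W := Submodule.mem_map_of_mem hp
    rw [hl2] at this
    exact this
  have hdec : p = (∑ i, p.1 i • (((fun j => if i = j then 1 else 0) : Fin n → ZMod 2),
      (0 : ZMod 2))) + p.2 • ((0 : Fin n → ZMod 2), (1 : ZMod 2)) := by
    have h1 : p.1 = ∑ i, p.1 i • ((fun j => if i = j then 1 else 0) : Fin n → ZMod 2) :=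
      pi_eq_sum_univ p.1
    apply Prod.ext
    · simp only [Prod.fst_add, Prod.fst_sum, Prod.smul_mk, smul_zero, add_zero]
      exact h1
    · rw [Prod.snd_add, Prod.snd_sum]; simp
  have h1 : ℓ ((0 : Fin n → ZMod 2), (1 : ZMod 2)) = 1 := by
    revert hl1
    generalize ℓ ((0 : Fin n → ZMod 2), (1 : ZMod 2)) = c
    intro hc
    fin_cases c
    · exact absurd rfl hc
    · rfl
  have hsum : ℓ p = (∑ i, p.1 i * ℓ ((fun j => if i = j then 1 else 0), 0)) + p.2 := by
    conv_lhs => rw [hdec]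
    rw [map_add, map_sum, LinearMap.map_smul, h1, smul_eq_mul, mul_one]
    congr 1
    exact Finset.sum_congr rfl fun i _ => by rw [LinearMap.map_smul, smul_eq_mul]
  rw [hlp] at hsum
  have h2 := eq_neg_of_add_eq_zero_left hsum.symm
  rw [show ∀ x : ZMod 2, -x = x from fun x => by fin_cases x <;> rfl] at h2
  rw [← h2]
  exact Finset.sum_congr rfl fun i _ => mul_comm _ _

lemma rank_one_fix {N : Type*} [Fintype N] [DecidableEq N]
    (P : Matrix N N ℂ) (hP : P * P = P) (htr : P.trace = 1)
    (v w : N → ℂ) (hv : P.mulVec v = v) (hw : P.mulVec w = w) (hv0 : v ≠ 0) :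
    ∃ u : ℂ, w = u • v := by
  set e := Matrix.toLin' P with he_def
  have he : e ∘ₗ e = e := by
    rw [he_def, ← Matrix.toLin'_mul, hP]
  obtain ⟨p, hp⟩ := (LinearMap.isProj_iff_isIdempotentElem e).2 he
  have htr2 : LinearMap.trace ℂ _ e = P.trace := by
    rw [LinearMap.trace_eq_matrix_trace ℂ (Pi.basisFun ℂ N) e,
      LinearMap.toMatrix_eq_toMatrix', he_def, LinearMap.toMatrix'_toLin']
  have hrank : Module.finrank ℂ p = 1 := by
    have := hp.trace
    rw [htr2, htr] at this
    exact_mod_cast this.symm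
  have hvm : v ∈ p := by
    have : e v = v := by rw [he_def, Matrix.toLin'_apply, hv]
    rw [← this]; exact hp.map_mem v
  have hwm : w ∈ p := by
    have : e w = w := by rw [he_def, Matrix.toLin'_apply, hw]
    rw [← this]; exact hp.map_mem w
  have hle : Submodule.span ℂ {v} ≤ p := by
    rw [Submodule.span_le, Set.singleton_subset_iff]; exact hvm
  have heq : Submodule.span ℂ {v} = p :=
    Submodule.eq_of_le_of_finrank_le hle
      (by rw [hrank, finrank_span_singleton hv0])
  rw [← heq] at hwm
  obtain ⟨u, hu⟩ := Submodule.mem_span_singleton.1 hwm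
  exact ⟨u, hu.symm⟩

lemma sg_sum {α : Type*} (s : Finset α) (t : α → ZMod 2) :
    sg (∑ i ∈ s, t i) = ∏ i ∈ s, sg (t i) := by
  classical
  induction s using Finset.induction with
  | empty => simp [sg]
  | insert _ _ h ih => rw [Finset.sum_insert h, Finset.prod_insert h, sg_add, ih]

lemma real_unit {z : ℂ} (h1 : (starRingEnd ℂ) z = z) (h2 : ‖z‖ = 1) :
    z = 1 ∨ z = -1 := by
  have him : z.im = 0 := by
    have := congrArg Complex.im h1
    simp [Complex.conj_im] at this
    linarith
  have habs : z.re * z.re = 1 := by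
    rw [Complex.norm_def, Complex.normSq_apply, him] at h2
    have h3 := congrArg (fun t : ℝ => t ^ 2) h2
    simp only [one_pow] at h3
    rw [show z.re * z.re + 0 * 0 = z.re * z.re by ring,
      Real.sq_sqrt (mul_self_nonneg z.re)] at h3
    exact h3
  rcases mul_self_eq_one_iff.1 habs with h | h
  · left; exact Complex.ext (by simp [h]) (by simp [him])
  · right; exact Complex.ext (by simp [h]) (by simp [him])

lemma sum_mulVec' {N : Type*} [Fintype N] {α : Type*} (T : Finset α)
    (M : α → Matrix N N ℂ) (v : N → ℂ) :
    (∑ A ∈ T, M A).mulVec v = ∑ A ∈ T, (M A).mulVec v := by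
  ext x
  simp only [Matrix.mulVec, dotProduct, Finset.sum_apply, Matrix.sum_apply,
    Finset.sum_mul]
  exact Finset.sum_comm

lemma map_conj_smul {N : Type*} (d : ℂ) (M : Matrix N N ℂ) :
    (d • M).map (starRingEnd ℂ) = (starRingEnd ℂ) d • M.map (starRingEnd ℂ) := by
  ext x y; simp [Matrix.map_apply, Matrix.smul_apply, _root_.map_mul]

/-- the complex conjugate of any stabilizer state |S⟩ equals (up to a
global phase) ζ|S⟩ for some Pauli operator ζ that is a tensor product of I's and σ_z's. -/
theorem stabilizer_state_conj {n : ℕ}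
    (S : Set (Matrix (Fin n → Fin 2) (Fin n → Fin 2) ℂ))
    (hSsub : ∀ A ∈ S, ∃ f : Fin n → Fin 4, A = pauliOp f ∨ A = -pauliOp f)
    (hone : (1 : Matrix (Fin n → Fin 2) (Fin n → Fin 2) ℂ) ∈ S)
    (hmul : ∀ A ∈ S, ∀ B ∈ S, A * B ∈ S)
    (habel : ∀ A ∈ S, ∀ B ∈ S, A * B = B * A)
    (hneg : (-1 : Matrix (Fin n → Fin 2) (Fin n → Fin 2) ℂ) ∉ S)
    (hcard : S.ncard = 2 ^ n)
    (ψ : (Fin n → Fin 2) → ℂ)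
    (hunit : star ψ ⬝ᵥ ψ = 1)
    (hstab : ∀ A ∈ S, A.mulVec ψ = ψ) :
    ∃ (g : Fin n → Fin 4) (u : ℂ),
      (∀ i, g i = 0 ∨ g i = 3) ∧ ‖u‖ = 1 ∧
      (fun x => starRingEnd ℂ (ψ x)) = u • (pauliOp g).mulVec ψ := by
  classical
  -- rewrite membership in ε-form
  have hS' : ∀ A ∈ S, ∃ (ε : ℂ) (f : Fin n → Fin 4),
      (ε = 1 ∨ ε = -1) ∧ A = ε • pauliOp f := by
    intro A hA
    obtain ⟨f, hf | hf⟩ := hSsub A hA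
    · exact ⟨1, f, Or.inl rfl, by rw [hf, one_smul]⟩
    · exact ⟨-1, f, Or.inr rfl, by rw [hf, neg_smul, one_smul]⟩
  have hherm : ∀ A ∈ S, Aᴴ = A := by
    intro A hA
    obtain ⟨ε, f, hε, rfl⟩ := hS' A hA
    rcases hε with rfl | rfl <;>
      simp [Matrix.conjTranspose_smul, pauliOp_herm, Complex.ext_iff]
  have hsq : ∀ A ∈ S, A * A = 1 := by
    intro A hA
    obtain ⟨ε, f, hε, rfl⟩ := hS' A hA
    rcases hε with rfl | rfl <;>
      simp [smul_mul_assoc, Matrix.mul_smul, pauliOp_sq, smul_smul]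
  -- c2 invariant
  set c2 : (Fin n → Fin 4) → ZMod 2 := fun f => ∑ i, yb (f i) with hc2
  -- conjugation of pauliOp in sg form
  have hconjP : ∀ f : Fin n → Fin 4,
      (pauliOp f).map (starRingEnd ℂ) = sg (c2 f) • pauliOp f := by
    intro f
    rw [conj_pauliOp, hc2]
    congr 1
    rw [sg_sum]
    exact Finset.prod_congr rfl fun i _ => cc_eq (f i)
  -- the label set
  set F : Set (Fin n → Fin 4) :=
    {f | ∃ ε : ℂ, (ε = 1 ∨ ε = -1) ∧ ε • pauliOp f ∈ S} with hF
  have hF0 : (fun _ => (0 : Fin 4)) ∈ F := ⟨1, Or.inl rfl, by rw [one_smul, pauliOp_zero]; exact hone⟩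
  have hFadd : ∀ f ∈ F, ∀ f' ∈ F, (fun i => tbl (f i) (f' i)) ∈ F ∧
      c2 (fun i => tbl (f i) (f' i)) = c2 f + c2 f' := by
    intro f hf f' hf'
    obtain ⟨ε, hε, hAS⟩ := hf
    obtain ⟨ε', hε', hBS⟩ := hf'
    set f'' : Fin n → Fin 4 := fun i => tbl (f i) (f' i) with hf''
    set c : ℂ := ∏ i, ph (f i) (f' i) with hcdef
    have hPP' : pauliOp f * pauliOp f' = c • pauliOp f'' := pauliOp_mul f f'
    have hABmul : (ε • pauliOp f) * (ε' • pauliOp f') = (ε * ε' * c) • pauliOp f'' := by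
      rw [smul_mul_assoc, Matrix.mul_smul, hPP', smul_smul, smul_smul, mul_assoc]
    have hCS : (ε * ε' * c) • pauliOp f'' ∈ S := by
      rw [← hABmul]; exact hmul _ hAS _ hBS
    have hconj_coeff : (starRingEnd ℂ) (ε * ε' * c) = ε * ε' * c := by
      have h1 := hherm _ hCS
      rw [Matrix.conjTranspose_smul, pauliOp_herm] at h1
      exact smul_pauliOp_cancel h1
    have habsc : ‖c‖ = 1 := by
      rw [hcdef, norm_prod]
      exact Finset.prod_eq_one fun i _ => abs_ph _ _
    have hab : ‖ε * ε' * c‖ = 1 := by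
      rcases hε with rfl | rfl <;> rcases hε' with rfl | rfl <;> simp [habsc]
    have hd := real_unit hconj_coeff hab
    have hne : ε * ε' * c ≠ 0 := by
      rcases hd with h | h <;> rw [h] <;> norm_num
    refine ⟨⟨ε * ε' * c, hd, hCS⟩, ?_⟩
    -- conjugate the product two ways
    have hεr : (starRingEnd ℂ) ε = ε := by rcases hε with rfl | rfl <;> simp
    have hεr' : (starRingEnd ℂ) ε' = ε' := by rcases hε' with rfl | rfl <;> simp
    have hway1 : ((ε • pauliOp f) * (ε' • pauliOp f')).map (starRingEnd ℂ)
        = (sg (c2 f'') * (ε * ε' * c)) • pauliOp f'' := by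
      rw [hABmul, map_conj_smul, hconj_coeff, hconjP, smul_smul, mul_comm]
    have hway2 : ((ε • pauliOp f) * (ε' • pauliOp f')).map (starRingEnd ℂ)
        = ((sg (c2 f) * sg (c2 f')) * (ε * ε' * c)) • pauliOp f'' := by
      rw [Matrix.map_mul, map_conj_smul, map_conj_smul, hεr, hεr', hconjP, hconjP]
      rw [smul_smul, smul_smul, smul_mul_assoc, Matrix.mul_smul, hPP']
      rw [smul_smul, smul_smul]
      congr 1
      ring
    have h3 : sg (c2 f'') * (ε * ε' * c) = (sg (c2 f) * sg (c2 f')) * (ε * ε' * c) :=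
      smul_pauliOp_cancel (hway1 ▸ hway2)
    have h4 : sg (c2 f'') = sg (c2 f + c2 f') := by
      rw [sg_add]
      exact mul_right_cancel₀ hne h3
    exact sg_inj _ _ h4
  -- the submodule of (x-part, y-count) pairs
  set xv : (Fin n → Fin 4) → (Fin n → ZMod 2) := fun f i => xs (f i) with hxv
  let W : Submodule (ZMod 2) ((Fin n → ZMod 2) × ZMod 2) :=
    { carrier := {p | ∃ f ∈ F, p = (xv f, c2 f)}
      add_mem' := by
        rintro p q ⟨f, hf, rfl⟩ ⟨f', hf', rfl⟩
        obtain ⟨hmem, hadd⟩ := hFadd f hf f' hf'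
        refine ⟨fun i => tbl (f i) (f' i), hmem, ?_⟩
        rw [Prod.mk_add_mk]
        congr 1
        · funext i
          exact (xs_tbl (f i) (f' i)).symm
        · exact hadd.symm
      zero_mem' := by
        refine ⟨fun _ => 0, hF0, ?_⟩
        have h1 : xv (fun _ => (0 : Fin 4)) = 0 := by
          funext i; simp [hxv, xs, show xs 0 = 0 from rfl]
        have h2 : c2 (fun _ => (0 : Fin 4)) = 0 := by
          simp [hc2, show yb 0 = 0 from rfl]
        rw [h1, h2]; rfl
      smul_mem' := by
        have hr2 : ∀ t : ZMod 2, t = 0 ∨ t = 1 := by decide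
        intro r p hp
        rcases hr2 r with rfl | rfl
        · refine ⟨fun _ => 0, hF0, ?_⟩
          have h1 : xv (fun _ => (0 : Fin 4)) = 0 := by
            funext i; simp [hxv, show xs 0 = 0 from rfl]
          have h2 : c2 (fun _ => (0 : Fin 4)) = 0 := by
            simp [hc2, show yb 0 = 0 from rfl]
          rw [zero_smul, h1, h2]; rfl
        · rwa [one_smul] }
  have hnotmem : (((0 : Fin n → ZMod 2), (1 : ZMod 2)) : (Fin n → ZMod 2) × ZMod 2) ∉ W := by
    rintro ⟨f, hf, hp⟩
    rw [Prod.mk.injEq] at hp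
    obtain ⟨h1', h2'⟩ := hp
    have h1 : xv f = 0 := h1'.symm
    have h2 : c2 f = 1 := h2'.symm
    have h3 : c2 f = 0 := by
      rw [hc2]
      apply Finset.sum_eq_zero
      intro i _
      exact yb_of_xs_zero (f i) (congrFun h1 i)
    rw [h3] at h2
    exact one_ne_zero h2.symm
  obtain ⟨a, ha⟩ := key_functional W hnotmem
  have haF : ∀ f ∈ F, ∑ i, a i * xs (f i) = c2 f := by
    intro f hf
    exact ha (xv f, c2 f) ⟨f, hf, rfl⟩
  -- the z-type Pauli
  set g : Fin n → Fin 4 := fun i => zg (a i) with hgdef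
  have hgz : ∀ i, g i = 0 ∨ g i = 3 := fun i => zg_cases (a i)
  set ζ : Matrix (Fin n → Fin 2) (Fin n → Fin 2) ℂ := pauliOp g with hzdef
  have hzsq : ζ * ζ = 1 := pauliOp_sq g
  have hzconj : ∀ A ∈ S, ζ * A * ζ = A.map (starRingEnd ℂ) := by
    intro A hA
    obtain ⟨ε, f, hε, rfl⟩ := hS' A hA
    have hfF : f ∈ F := ⟨ε, hε, hA⟩
    have hεr : (starRingEnd ℂ) ε = ε := by rcases hε with rfl | rfl <;> simp
    have h1 : ζ * pauliOp f * ζ = sg (c2 f) • pauliOp f := by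
      rw [hzdef, pauliOp_mul, smul_mul_assoc, pauliOp_mul, smul_smul]
      have h2 : (fun i => tbl (tbl (g i) (f i)) (g i)) = f := funext fun i => tbl_tbl _ _
      rw [h2, ← Finset.prod_mul_distrib]
      congr 1
      calc ∏ i, ph (g i) (f i) * ph (tbl (g i) (f i)) (g i)
          = ∏ i, sg (a i * xs (f i)) := Finset.prod_congr rfl fun i _ => zg_conj (a i) (f i)
        _ = sg (∑ i, a i * xs (f i)) := (sg_sum _ _).symm
        _ = sg (c2 f) := by rw [haF f hfF]
    rw [map_conj_smul, hεr, hconjP]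
    rw [Matrix.mul_smul, smul_mul_assoc, h1, smul_smul, mul_comm]
  -- finiteness of S
  have hfin : S.Finite := by
    by_contra hinf
    have h0 : S.ncard = 0 := Set.Infinite.ncard hinf
    rw [h0] at hcard
    exact (pow_ne_zero n two_ne_zero) hcard.symm
  set T : Finset (Matrix (Fin n → Fin 2) (Fin n → Fin 2) ℂ) := hfin.toFinset with hT
  have hTcard : T.card = 2 ^ n := by
    rw [hT, ← Set.ncard_eq_toFinset_card S hfin]; exact hcard
  have hmemT : ∀ A, A ∈ T ↔ A ∈ S := fun A => hfin.mem_toFinset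
  have h2ne : ((2 : ℂ) ^ n) ≠ 0 := pow_ne_zero n two_ne_zero
  set c0 : ℂ := ((2 : ℂ) ^ n)⁻¹ with hc0
  set P : Matrix (Fin n → Fin 2) (Fin n → Fin 2) ℂ := c0 • ∑ A ∈ T, A with hP
  have hcast : ((T.card : ℂ)) = (2 : ℂ) ^ n := by rw [hTcard]; push_cast; ring
  have hfix : ∀ v : (Fin n → Fin 2) → ℂ,
      (∀ A ∈ S, A.mulVec v = v) → P.mulVec v = v := by
    intro v hv
    rw [hP, Matrix.smul_mulVec, sum_mulVec',
      Finset.sum_congr rfl (fun A hA => hv A ((hmemT A).1 hA)), Finset.sum_const]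
    rw [show (T.card • v) = ((T.card : ℂ)) • v from (Nat.cast_smul_eq_nsmul ℂ _ v).symm]
    rw [smul_smul, hc0, hcast, inv_mul_cancel₀ h2ne, one_smul]
  have hAP : ∀ A ∈ S, A * P = P := by
    intro A hA
    conv_rhs => rw [hP]
    rw [hP, Matrix.mul_smul, Finset.mul_sum]
    congr 1
    refine Finset.sum_nbij' (i := fun B => A * B) (j := fun C => A * C)
      ?_ ?_ ?_ ?_ ?_
    · intro B hB; exact (hmemT _).2 (hmul A hA B ((hmemT B).1 hB))
    · intro C hC; exact (hmemT _).2 (hmul A hA C ((hmemT C).1 hC))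
    · intro B _; show A * (A * B) = B; rw [← mul_assoc, hsq A hA, one_mul]
    · intro C _; show A * (A * C) = C; rw [← mul_assoc, hsq A hA, one_mul]
    · intro B _; rfl
  have hPP : P * P = P := by
    conv_lhs => rw [hP]
    rw [smul_mul_assoc, Finset.sum_mul,
      Finset.sum_congr rfl (fun A hA => hAP A ((hmemT A).1 hA)), Finset.sum_const]
    rw [show (T.card • P) = ((T.card : ℂ)) • P from (Nat.cast_smul_eq_nsmul ℂ _ P).symm]
    rw [smul_smul, hc0, hcast, inv_mul_cancel₀ h2ne, one_smul]
  have htrP : P.trace = 1 := by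
    rw [hP, Matrix.trace_smul, Matrix.trace_sum]
    have hone_mem : (1 : Matrix (Fin n → Fin 2) (Fin n → Fin 2) ℂ) ∈ T := (hmemT 1).2 hone
    rw [Finset.sum_eq_single_of_mem 1 hone_mem ?side]
    · rw [Matrix.trace_one]
      have hcard2 : (Fintype.card (Fin n → Fin 2) : ℂ) = (2 : ℂ) ^ n := by
        rw [Fintype.card_fun]
        push_cast
        simp
      rw [hcard2, hc0, smul_eq_mul, inv_mul_cancel₀ h2ne]
    case side =>
      intro A hA hA1
      obtain ⟨ε, f, hε, rfl⟩ := hS' A ((hmemT A).1 hA)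
      by_cases hf0 : ∀ i, f i = 0
      · exfalso
        have hP1 : pauliOp f = 1 := by
          rw [show f = fun _ => (0 : Fin 4) from funext hf0, pauliOp_zero]
        rcases hε with rfl | rfl
        · exact hA1 (by rw [hP1, one_smul])
        · apply hneg
          have hmem := (hmemT _).1 hA
          rwa [hP1, neg_smul, one_smul] at hmem
      · push_neg at hf0
        obtain ⟨i, hi⟩ := hf0
        rw [Matrix.trace_smul, trace_pauliOp,
          Finset.prod_eq_zero (Finset.mem_univ i) (by rw [trace_pauli, if_neg hi]),
          smul_zero]
  have hψ0 : ψ ≠ 0 := by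
    intro h
    rw [h] at hunit
    simp [dotProduct] at hunit
  set ψc : (Fin n → Fin 2) → ℂ := fun x => (starRingEnd ℂ) (ψ x) with hψc
  have hconj_mulVec : ∀ A ∈ S, (A.map (starRingEnd ℂ)).mulVec ψc = ψc := by
    intro A hA
    funext x
    have hx := congrFun (hstab A hA) x
    calc (A.map (starRingEnd ℂ)).mulVec ψc x
        = (starRingEnd ℂ) (A.mulVec ψ x) := by
          simp [Matrix.mulVec, dotProduct, Matrix.map_apply, map_sum,
            _root_.map_mul, hψc]
      _ = ψc x := by rw [hx]
  have hwfix : ∀ A ∈ S, A.mulVec (ζ.mulVec ψc) = ζ.mulVec ψc := by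
    intro A hA
    rw [Matrix.mulVec_mulVec]
    have hAz : A * ζ = ζ * (A.map (starRingEnd ℂ)) := by
      calc A * ζ = (ζ * ζ) * (A * ζ) := by rw [hzsq, one_mul]
        _ = ζ * (ζ * A * ζ) := by rw [mul_assoc, ← mul_assoc ζ A ζ, ← mul_assoc]
        _ = ζ * (A.map (starRingEnd ℂ)) := by rw [hzconj A hA]
    rw [hAz, ← Matrix.mulVec_mulVec, hconj_mulVec A hA]
  obtain ⟨u, hu⟩ := rank_one_fix P hPP htrP ψ (ζ.mulVec ψc)
    (hfix ψ hstab) (hfix _ hwfix) hψ0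
  have hψc_eq : ψc = u • ζ.mulVec ψ := by
    have h1 : ζ.mulVec (ζ.mulVec ψc) = ψc := by
      rw [Matrix.mulVec_mulVec, hzsq, Matrix.one_mulVec]
    rw [← h1, hu, Matrix.mulVec_smul]
  have hζψ : star (ζ.mulVec ψ) ⬝ᵥ (ζ.mulVec ψ) = 1 := by
    rw [Matrix.star_mulVec, ← Matrix.dotProduct_mulVec, Matrix.mulVec_mulVec]
    rw [show ζᴴ = ζ from by rw [hzdef, pauliOp_herm], hzsq, Matrix.one_mulVec]
    exact hunit
  have hnorm1 : star ψc ⬝ᵥ ψc = 1 := by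
    calc star ψc ⬝ᵥ ψc = ∑ x, ψ x * (starRingEnd ℂ) (ψ x) := by
          simp [dotProduct, hψc]
      _ = ∑ x, (starRingEnd ℂ) (ψ x) * ψ x := Finset.sum_congr rfl fun x _ => mul_comm _ _
      _ = star ψ ⬝ᵥ ψ := rfl
      _ = 1 := hunit
  have habs : ‖u‖ = 1 := by
    have h2 := hnorm1
    rw [hψc_eq, star_smul, smul_dotProduct, dotProduct_smul, hζψ] at h2
    have h3 : (starRingEnd ℂ) u * u = 1 := by
      simpa [smul_eq_mul, RCLike.star_def] using h2
    have h4 : Complex.normSq u = 1 := by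
      have := Complex.normSq_eq_conj_mul_self (z := u)
      rw [h3] at this
      exact_mod_cast this
    have h5 : ‖u‖ ^ 2 = 1 := by rw [Complex.sq_norm, h4]
    nlinarith [norm_nonneg u, h5]
  exact ⟨g, u, hgz, habs, hψc_eq⟩
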